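/- For the coordinate descent iteration q_{k+1} = q_k - ∇_i f(q_k) e_i applied to f with initialization q_0 = 0 and s ≥ 0, at every iteration we have q_{k+1} ≥ q_k ≥ 0 and ∇f(q_k) ≤ 0 componentwise, provided the coordinate i chosen at each step satisfies ∇_i f(q_k) < 0. -/

import Mathlib

open Matrix

/-- For the coordinate descent iteration `q_{k+1} = q_k - ∇_i f(q_k) e_i` applied to
`f(q) = (1/2)⟨q,Qq⟩ - α⟨s, D^{-1/2}q⟩` with `q_0 = 0` and `s ≥ 0`, and with the chosen
coordinate satisfying `∇_{i_k} f(q_k) < 0`, every iterate satisfies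
`q_{k+1} ≥ q_k ≥ 0` and `∇f(q_k) ≤ 0` componentwise. -/
theorem coordinate_descent_monotone_nonneg_gradient {n : ℕ}
    (A : Matrix (Fin n) (Fin n) ℝ) (hA : A.IsSymm)
    (hAnn : ∀ i j, 0 ≤ A i j) (hAdiag : ∀ i, A i i = 0)
    (d : Fin n → ℝ) (hd : ∀ i, d i = ∑ j, A i j) (hdpos : ∀ i, 0 < d i)
    (α : ℝ) (hα : α ∈ Set.Ioo (0 : ℝ) 1)
    (s : Fin n → ℝ) (hs : ∀ i, 0 ≤ s i)
    (Dinvhalf : Matrix (Fin n) (Fin n) ℝ)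
    (hDinvhalf : Dinvhalf = Matrix.diagonal fun i => (Real.sqrt (d i))⁻¹)
    (Q : Matrix (Fin n) (Fin n) ℝ)
    (hQ : Q = α • (1 : Matrix (Fin n) (Fin n) ℝ) +
      ((1 - α) / 2) • ((1 : Matrix (Fin n) (Fin n) ℝ) - Dinvhalf * A * Dinvhalf))
    (g : (Fin n → ℝ) → (Fin n → ℝ))
    (hg : ∀ q, g q = Q.mulVec q - α • Dinvhalf.mulVec s)
    (q : ℕ → Fin n → ℝ) (i : ℕ → Fin n)
    (hq0 : q 0 = 0)
    (hsel : ∀ k, g (q k) (i k) < 0)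
    (hupd : ∀ k, q (k + 1) = Function.update (q k) (i k) (q k (i k) - g (q k) (i k))) :
    ∀ k, (∀ j, 0 ≤ q k j) ∧ (∀ j, q k j ≤ q (k + 1) j) ∧ (∀ j, g (q k) j ≤ 0) := by
  obtain ⟨hα0, hα1⟩ := hα
  have hB : ∀ j l, (Dinvhalf * A * Dinvhalf) j l
      = (Real.sqrt (d j))⁻¹ * A j l * (Real.sqrt (d l))⁻¹ := by
    intro j l
    simp [hDinvhalf, Matrix.diagonal_mul, Matrix.mul_diagonal]
  have hBnn : ∀ j l, 0 ≤ (Dinvhalf * A * Dinvhalf) j l := by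
    intro j l
    rw [hB]
    have := hAnn j l
    have h1 := Real.sqrt_nonneg (d j)
    have h2 := Real.sqrt_nonneg (d l)
    positivity
  have hQoff : ∀ j l, j ≠ l → Q j l ≤ 0 := by
    intro j l hjl
    have : Q j l = -(((1 - α) / 2) * (Dinvhalf * A * Dinvhalf) j l) := by
      simp [hQ, Matrix.one_apply_ne hjl]
    rw [this]
    have := hBnn j l
    have h1 : (0:ℝ) ≤ (1 - α) / 2 := by linarith
    nlinarith
  have hQdiag : ∀ j, Q j j ≤ 1 := by
    intro j
    have hb : (Dinvhalf * A * Dinvhalf) j j = 0 := by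
      rw [hB, hAdiag]; ring
    have : Q j j = α + (1 - α) / 2 := by
      simp [hQ, Matrix.one_apply_eq, hb]
    rw [this]; linarith
  have hstep : ∀ k j, g (q (k + 1)) j = g (q k) j - Q j (i k) * g (q k) (i k) := by
    intro k j
    have hq' : q (k + 1) = q k - (g (q k) (i k)) • (Pi.single (i k) (1:ℝ) : Fin n → ℝ) := by
      rw [hupd k]
      funext l
      by_cases hl : l = i k
      · subst hl; simp
      · simp [Function.update_of_ne hl, Pi.single_eq_of_ne hl]
    set c := g (q k) (i k) with hc
    rw [hq', hg, hg]
    simp only [Matrix.mulVec_sub, Matrix.mulVec_smul, Matrix.mulVec_single,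
      Pi.sub_apply, Pi.smul_apply, smul_eq_mul, mul_one,
        MulOpposite.op_one, one_smul, Matrix.col_apply]
    ring
  have key : ∀ k, (∀ j, 0 ≤ q k j) ∧ (∀ j, g (q k) j ≤ 0) := by
    intro k
    induction k with
    | zero =>
      constructor
      · intro j; simp [hq0]
      · intro j
        have : g (q 0) j = -(α * ((Real.sqrt (d j))⁻¹ * s j)) := by
          simp [hg, hq0, hDinvhalf, Matrix.mulVec_diagonal]
        rw [this]
        have h1 := Real.sqrt_nonneg (d j)
        have h2 := hs j
        have : 0 ≤ α * ((Real.sqrt (d j))⁻¹ * s j) := by positivity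
        linarith
    | succ k ih =>
      obtain ⟨ihq, ihg⟩ := ih
      constructor
      · intro j
        rw [hupd k]
        by_cases hj : j = i k
        · subst hj
          rw [Function.update_self]
          have h1 := hsel k
          have h2 := ihq (i k)
          linarith
        · rw [Function.update_of_ne hj]; exact ihq j
      · intro j
        rw [hstep k j]
        by_cases hj : j = i k
        · subst hj
          have h1 : g (q k) (i k) * (1 - Q (i k) (i k)) ≤ 0 :=
            mul_nonpos_of_nonpos_of_nonneg (le_of_lt (hsel k))
              (by linarith [hQdiag (i k)])
          nlinarith
        · have h1 : 0 ≤ Q j (i k) * g (q k) (i k) :=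
            by nlinarith [hQoff j (i k) hj, hsel k]
          linarith [ihg j]
  intro k
  refine ⟨(key k).1, ?_, (key k).2⟩
  intro j
  rw [hupd k]
  by_cases hj : j = i k
  · subst hj
    rw [Function.update_self]
    linarith [hsel k]
  · rw [Function.update_of_ne hj]
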